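/- Let X = {s_n : n ∈ ℕ} where s_n = ∑_{k=0}^{n−1} 1/(k+1), equipped with the metric induced from ℝ. Then X is a complete metric space, the map T : X → X given by T(s_n) = s_{n+1} has no fixed point, and the function φ : X → ℝ given by φ(s_n) = ∑_{k=n}^{∞} 1/(k+1)² satisfies (d(x, Tx))² ≤ φ(x) − φ(Tx) for all x ∈ X. -/
import Mathlib


/-- Partial sums of the harmonic series. -/
noncomputable def harmonicPartial (n : ℕ) : ℝ := ∑ k ∈ Finset.range n, (1 : ℝ) / (k + 1)

lemma hp_succ (n : ℕ) : harmonicPartial (n + 1) = harmonicPartial n + 1 / (n + 1) := by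
  simp [harmonicPartial, Finset.sum_range_succ]

lemma hp_mono : StrictMono harmonicPartial := by
  apply strictMono_nat_of_lt_succ
  intro n
  rw [hp_succ]
  have : (0:ℝ) < 1 / (n + 1) := by positivity
  linarith

lemma isClosed_range_hp : IsClosed (Set.range harmonicPartial) := by
  rw [← isOpen_compl_iff, isOpen_iff_mem_nhds]
  intro x hx
  obtain ⟨N, hN⟩ := Filter.eventually_atTop.1
    (Filter.tendsto_atTop.1 Real.tendsto_sum_range_one_div_nat_succ_atTop (x + 1))
  set C : Set ℝ := (↑((Finset.range N).image harmonicPartial) : Set ℝ) ∪ Set.Ici (x + 1) with hC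
  have hCclosed : IsClosed C := ((Finset.range N).image harmonicPartial).finite_toSet.isClosed.union isClosed_Ici
  have hsub : Set.range harmonicPartial ⊆ C := by
    rintro _ ⟨n, rfl⟩
    by_cases h : n < N
    · exact Or.inl (Finset.mem_coe.2 (Finset.mem_image.2 ⟨n, Finset.mem_range.2 h, rfl⟩))
    · exact Or.inr (hN n (le_of_not_gt h))
  have hxC : x ∉ C := by
    rintro (h | h)
    · obtain ⟨n, -, hn⟩ := Finset.mem_image.1 (Finset.mem_coe.1 h)
      exact hx ⟨n, hn⟩
    · exact absurd (Set.mem_Ici.1 h) (by linarith)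
  exact Filter.mem_of_superset (hCclosed.isOpen_compl.mem_nhds hxC)
    (Set.compl_subset_compl.2 hsub)

lemma summable_aux (n : ℕ) : Summable (fun k : ℕ => (1 : ℝ) / ((k + n : ℝ) + 1) ^ 2) := by
  have h : Summable (fun k : ℕ => (1 : ℝ) / (k : ℝ) ^ 2) :=
    Real.summable_one_div_nat_pow.2 one_lt_two
  have := (summable_nat_add_iff (n + 1)).2 h
  refine this.congr fun k => ?_
  push_cast
  ring_nf

theorem harmonic_counterexample :
    CompleteSpace {x : ℝ // ∃ n : ℕ, x = harmonicPartial n} ∧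
    ∀ (T : {x : ℝ // ∃ n : ℕ, x = harmonicPartial n} →
           {x : ℝ // ∃ n : ℕ, x = harmonicPartial n})
      (φ : {x : ℝ // ∃ n : ℕ, x = harmonicPartial n} → ℝ),
      (∀ n : ℕ, (T ⟨harmonicPartial n, n, rfl⟩ : ℝ) = harmonicPartial (n + 1)) →
      (∀ n : ℕ, φ ⟨harmonicPartial n, n, rfl⟩ =
        ∑' k : ℕ, (1 : ℝ) / ((k + n : ℝ) + 1) ^ 2) →
      (∀ x, T x ≠ x) ∧ (∀ x, (dist x (T x)) ^ 2 ≤ φ x - φ (T x)) := by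
  constructor
  · have hset : {x : ℝ | ∃ n : ℕ, x = harmonicPartial n} = Set.range harmonicPartial := by
      ext x; simp [eq_comm]
    have : IsClosed {x : ℝ | ∃ n : ℕ, x = harmonicPartial n} := hset ▸ isClosed_range_hp
    exact this.completeSpace_coe
  · intro T φ hT hφ
    constructor
    · intro x h
      obtain ⟨n, hn⟩ := x.2
      have hx : x = ⟨harmonicPartial n, n, rfl⟩ := Subtype.ext hn
      rw [hx] at h
      have : harmonicPartial (n + 1) = harmonicPartial n := by
        rw [← hT n, h]
      exact absurd this (hp_mono.injective.ne (by omega))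
    · intro x
      obtain ⟨n, hn⟩ := x.2
      have hx : x = ⟨harmonicPartial n, n, rfl⟩ := Subtype.ext hn
      have hTx : T x = ⟨harmonicPartial (n + 1), n + 1, rfl⟩ := by
        rw [hx]; exact Subtype.ext (hT n)
      have hTx' : ((T x : ℝ)) = harmonicPartial (n + 1) := congrArg Subtype.val hTx
      have hd : dist x (T x) = 1 / ((n : ℝ) + 1) := by
        rw [Subtype.dist_eq, hn, hTx', Real.dist_eq, hp_succ]
        have h1 : harmonicPartial n - (harmonicPartial n + 1 / ((n : ℝ) + 1))
            = -(1 / ((n : ℝ) + 1)) := by ring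
        rw [h1, abs_neg, abs_of_nonneg (by positivity)]
      have hsum : (∑' k : ℕ, (1 : ℝ) / ((k + n : ℝ) + 1) ^ 2)
          = 1 / ((n : ℝ) + 1) ^ 2 + ∑' k : ℕ, (1 : ℝ) / ((k + (n + 1 : ℕ) : ℝ) + 1) ^ 2 := by
        rw [Summable.tsum_eq_zero_add (summable_aux n)]
        congr 1
        · norm_num
        · apply tsum_congr
          intro k
          push_cast
          ring_nf
      have h1 : φ x = ∑' k : ℕ, (1 : ℝ) / ((k + n : ℝ) + 1) ^ 2 := by rw [hx, hφ n]
      have h2 : φ (T x) = ∑' k : ℕ, (1 : ℝ) / ((k + (n + 1 : ℕ) : ℝ) + 1) ^ 2 := by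
        rw [hTx, hφ (n + 1)]
      have h3 : (1 / ((n : ℝ) + 1)) ^ 2 = 1 / ((n : ℝ) + 1) ^ 2 := by
        rw [div_pow, one_pow]
      rw [hd, h1, h2, hsum, h3]
      linarith
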